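/- Let (R, m) be a Noetherian local ring. The ideal Z(m) of polynomials vanishing on m contains a regular polynomial (a non-zero-divisor in R[x]) if and only if dim R = 0, i.e., R is Artinian. -/

import Mathlib

open Polynomial IsLocalRing


/-- The ideal of polynomials in `R[X]` mapping every element of `S` into the ideal `I`. -/
def zeroFunctionsInto {R : Type*} [CommRing R] (S : Set R) (I : Ideal R) : Ideal R[X] where
  carrier := {f | ∀ s ∈ S, f.eval s ∈ I}
  add_mem' := fun hf hg s hs => by simpa using I.add_mem (hf s hs) (hg s hs)
  zero_mem' := fun s _ => by simp
  smul_mem' := fun c f hf s hs => by simpa using I.mul_mem_left (c.eval s) (hf s hs)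

/-- The ideal of polynomials vanishing on the subset `S`. -/
def zeroFunctions {R : Type*} [CommRing R] (S : Set R) : Ideal R[X] :=
  zeroFunctionsInto S ⊥


-- Lemma D pieces: transfer Artinian along surjective algebra map
lemma isArtinian_of_surjective_algebra {R S M : Type*} [CommRing R] [Ring S] [Algebra R S]
    (hsurj : Function.Surjective (algebraMap R S)) [AddCommGroup M] [Module R M] [Module S M]
    [IsScalarTower R S M] [IsArtinian S M] : IsArtinian R M := by
  rw [isArtinian_iff]
  have wf : WellFounded ((· < ·) : Submodule S M → Submodule S M → Prop) :=
    (isArtinian_iff S M).mp inferInstance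
  let g : Submodule R M → Submodule S M := fun p =>
    { carrier := p
      add_mem' := fun ha hb => p.add_mem ha hb
      zero_mem' := p.zero_mem
      smul_mem' := by
        intro c x hx
        obtain ⟨r, rfl⟩ := hsurj c
        rw [algebraMap_smul]
        exact p.smul_mem r hx }
  have hg : ∀ a b : Submodule R M, a < b → g a < g b := by
    intro a b hab
    refine lt_of_le_of_ne (fun x hx => hab.le hx) ?_
    intro he
    apply hab.ne
    apply le_antisymm hab.le
    intro x hx
    have : x ∈ g b := hx
    rw [← he] at this
    exact this
  exact Subrelation.wf (fun {a b} h => hg a b h) (InvImage.wf g wf)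

-- Lemma D: Noetherian module killed by the maximal ideal is Artinian
lemma isArtinian_of_torsion_maximalIdeal {R M : Type*} [CommRing R] [IsLocalRing R]
    [AddCommGroup M] [Module R M] [IsNoetherian R M]
    (h : Module.IsTorsionBySet R M (maximalIdeal R : Set R)) : IsArtinian R M := by
  letI : Module (R ⧸ maximalIdeal R) M := h.module
  letI : Field (R ⧸ maximalIdeal R) := Ideal.Quotient.field _
  haveI : IsScalarTower R (R ⧸ maximalIdeal R) M := h.isScalarTower
  haveI : IsNoetherian (R ⧸ maximalIdeal R) M := isNoetherian_of_tower R inferInstance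
  haveI : Module.Finite (R ⧸ maximalIdeal R) M :=
    ⟨IsNoetherian.noetherian ⊤⟩
  haveI : IsArtinian (R ⧸ maximalIdeal R) M := isArtinian_of_fg_of_artinian'
  exact isArtinian_of_surjective_algebra (S := R ⧸ maximalIdeal R)
    (by rw [Ideal.Quotient.algebraMap_eq]; exact Ideal.Quotient.mk_surjective)

-- Lemma F: step down
lemma step_down {R : Type*} [CommRing R] [IsNoetherianRing R] [IsLocalRing R] (i : ℕ)
    (IH : IsArtinian R (maximalIdeal R ^ (i + 1) : Ideal R)) :
    IsArtinian R (maximalIdeal R ^ i : Ideal R) := by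
  set m := maximalIdeal R
  set N : Submodule R (m ^ i : Ideal R) := Submodule.comap (m ^ i : Ideal R).subtype (m ^ (i+1)) with hN
  haveI : IsArtinian R N :=
    isArtinian_of_linearEquiv (Submodule.comapSubtypeEquivOfLe
      (Ideal.pow_le_pow_right (Nat.le_succ i))).symm
  haveI : IsArtinian R ((m ^ i : Ideal R) ⧸ N) := by
    apply isArtinian_of_torsion_maximalIdeal
    intro x hc
    obtain ⟨y, rfl⟩ := Submodule.Quotient.mk_surjective N x
    rw [← Submodule.Quotient.mk_smul, Submodule.Quotient.mk_eq_zero]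
    show ((hc.1 : R) • y : R) ∈ m ^ (i + 1)
    rw [pow_succ', smul_eq_mul]
    exact Ideal.mul_mem_mul hc.2 y.2
  exact (isArtinian_iff_submodule_quotient N).mpr ⟨‹_›, ‹_›⟩

-- Lemma E
lemma artinian_of_nilpotent_maximalIdeal {R : Type*} [CommRing R] [IsNoetherianRing R]
    [IsLocalRing R] (h : IsNilpotent (maximalIdeal R)) : IsArtinianRing R := by
  obtain ⟨n, hn⟩ := h
  have claim : ∀ i, IsArtinian R (maximalIdeal R ^ (n - i) : Ideal R) := by
    intro i
    induction i with
    | zero =>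
      rw [Nat.sub_zero, hn]
      exact inferInstanceAs (IsArtinian R (⊥ : Ideal R))
    | succ i IH =>
      rcases le_or_gt n i with hni | hni
      · rwa [Nat.sub_eq_zero_of_le (hni.trans (Nat.le_succ i)),
          ← Nat.sub_eq_zero_of_le hni]
      · have : n - i = (n - (i + 1)) + 1 := by omega
        rw [this] at IH
        exact step_down _ IH
  have := claim n
  rw [Nat.sub_self, pow_zero, Ideal.one_eq_top] at this
  exact isArtinian_of_linearEquiv (Submodule.topEquiv (R := R) (M := R))

-- Lemma B
lemma ann_step {R : Type*} [CommRing R] {r x : R} {n : ℕ} (hr : r ≠ 0) (h : r * x ^ n = 0) :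
    ∃ r', r' ≠ 0 ∧ r' * x = 0 ∧ r ∣ r' := by
  have hP : ∃ k, r * x ^ k = 0 := ⟨n, h⟩
  classical
  let m := Nat.find hP
  have hm : r * x ^ m = 0 := Nat.find_spec hP
  have hm0 : m ≠ 0 := by
    intro h0
    rw [h0, pow_zero, mul_one] at hm
    exact hr hm
  refine ⟨r * x ^ (m - 1), ?_, ?_, ⟨x ^ (m-1), rfl⟩⟩
  · exact Nat.find_min hP (Nat.sub_lt (Nat.pos_of_ne_zero hm0) one_pos)
  · rw [mul_assoc, ← pow_succ, Nat.sub_add_cancel (Nat.one_le_iff_ne_zero.mpr hm0)]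
    exact hm

-- Lemma C
lemma ann_finset {R ι : Type*} [CommRing R] (s : Finset ι) (c : ι → R) :
    ∀ r : R, r ≠ 0 → (∀ i ∈ s, ∃ n : ℕ, r * c i ^ n = 0) →
      ∃ r', r' ≠ 0 ∧ (∀ i ∈ s, r' * c i = 0) ∧ r ∣ r' := by
  classical
  induction s using Finset.induction_on with
  | empty => exact fun r hr _ => ⟨r, hr, fun i hi => absurd hi (Finset.notMem_empty i), dvd_refl r⟩
  | @insert a s ha IH =>
    intro r hr h
    obtain ⟨r', hr', hann, u, rfl⟩ := IH r hr (fun i hi => h i (Finset.mem_insert_of_mem hi))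
    obtain ⟨n, hn⟩ := h a (Finset.mem_insert_self a s)
    have hn' : r * u * c a ^ n = 0 := by
      rw [mul_comm r u, mul_assoc, hn, mul_zero]
    obtain ⟨r'', hr'', hra, v, rfl⟩ := ann_step hr' hn'
    refine ⟨r * u * v, hr'', fun i hi => ?_, ⟨u * v, by ring⟩⟩
    rcases Finset.mem_insert.mp hi with rfl | hi
    · exact hra
    · calc r * u * v * c i = (r * u * c i) * v := by ring
        _ = 0 := by rw [hann i hi, zero_mul]

-- coefficients lie in any prime not containing m
lemma coeffs_mem_prime {R : Type*} [CommRing R] [IsLocalRing R] {f : R[X]}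
    (hf : f ∈ zeroFunctions (maximalIdeal R : Set R)) (p : Ideal R) [p.IsPrime]
    (hp : ¬ maximalIdeal R ≤ p) : ∀ i, f.coeff i ∈ p := by
  obtain ⟨z, hzm, hzp⟩ := SetLike.not_le_iff_exists.mp hp
  have hmap : f.map (Ideal.Quotient.mk p) = 0 := by
    apply Polynomial.eq_zero_of_infinite_isRoot
    apply Set.infinite_of_injective_forall_mem
      (f := fun n : ℕ => (Ideal.Quotient.mk p z) ^ (n + 1))
    case hi =>
      intro i j hij
      by_contra hne
      wlog hlt : i < j generalizing i j
      · exact this hij.symm (Ne.symm hne) (by omega)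
      replace hij : (Ideal.Quotient.mk p z) ^ (i + 1) = (Ideal.Quotient.mk p z) ^ (j + 1) := hij
      have hz0 : Ideal.Quotient.mk p z ≠ 0 := by
        rwa [Ne, Ideal.Quotient.eq_zero_iff_mem]
      have : (Ideal.Quotient.mk p z) ^ (i + 1) * ((Ideal.Quotient.mk p z) ^ (j - i) - 1) = 0 := by
        rw [mul_sub, mul_one, ← pow_add]
        rw [show i + 1 + (j - i) = j + 1 by omega, hij]
        ring
      have h1 : (Ideal.Quotient.mk p z) ^ (j - i) = 1 := by
        rcases mul_eq_zero.mp this with h | h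
        · exact absurd h (pow_ne_zero _ hz0)
        · exact sub_eq_zero.mp h
      -- z ^ (j-i) - 1 ∈ p ≤ m, z^(j-i) ∈ m ⇒ 1 ∈ m
      have hzm' : z ^ (j - i) ∈ maximalIdeal R :=
        Ideal.pow_mem_of_mem _ hzm _ (by omega)
      have hsub : z ^ (j - i) - 1 ∈ p := by
        rw [← Ideal.Quotient.eq_zero_iff_mem, map_sub, map_pow, h1, map_one, sub_self]
      have h1m : (1 : R) ∈ maximalIdeal R := by
        have := (maximalIdeal R).sub_mem hzm' (le_maximalIdeal (Ideal.IsPrime.ne_top ‹_›) hsub)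
        simpa using this
      exact (Ideal.IsMaximal.ne_top (maximalIdeal.isMaximal R)) (Ideal.eq_top_of_isUnit_mem _ h1m isUnit_one)
    case hf =>
      intro n
      show IsRoot _ _
      have hz : z ^ (n + 1) ∈ maximalIdeal R := Ideal.pow_mem_of_mem _ hzm _ n.succ_pos
      have : f.eval (z ^ (n + 1)) = 0 := by
        exact hf (z ^ (n + 1)) hz
      rw [IsRoot, eval_map, ← map_pow, Polynomial.eval₂_at_apply, this, map_zero]
  intro i
  have := congrArg (fun g => Polynomial.coeff g i) hmap
  simp only [Polynomial.coeff_map, Polynomial.coeff_zero] at this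
  rwa [← Ideal.Quotient.eq_zero_iff_mem]


theorem statement_12 {R : Type*} [CommRing R] [IsNoetherianRing R] [IsLocalRing R] :
    (∃ f ∈ zeroFunctions (maximalIdeal R : Set R), f ∈ nonZeroDivisors R[X]) ↔
      IsArtinianRing R := by
  constructor
  · rintro ⟨f, hf, hreg⟩
    rcases subsingleton_or_nontrivial R with hS | hN
    · exact Ring.isArtinian_of_zero_eq_one (Subsingleton.elim 0 1)
    apply artinian_of_nilpotent_maximalIdeal
    have hle : maximalIdeal R ≤ nilradical R := by
      rw [nilradical, Ideal.radical_eq_sInf]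
      refine le_sInf ?_
      rintro p ⟨-, hp⟩
      haveI : p.IsPrime := hp
      -- reduce to a minimal prime below p
      obtain ⟨q, hq, hqp⟩ := Ideal.exists_minimalPrimes_le (bot_le : (⊥ : Ideal R) ≤ p)
      haveI : q.IsPrime := hq.1.1
      refine le_trans ?_ hqp
      by_contra hql
      have hcoeff : ∀ i, f.coeff i ∈ q := coeffs_mem_prime hf q hql
      have key : ∀ i : ℕ, ∃ (n : ℕ) (s : R), s ∈ q.primeCompl ∧ s * f.coeff i ^ n = 0 := by
        intro i
        have hnil : IsNilpotent (algebraMap R (Localization q.primeCompl) (f.coeff i)) := by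
          haveI := Ring.KrullDimLE.of_isLocalization q hq (Localization q.primeCompl)
          rw [Ring.KrullDimLE.isNilpotent_iff_mem_maximalIdeal]
          exact (IsLocalization.AtPrime.to_map_mem_maximal_iff _ q _).mpr (hcoeff i)
        obtain ⟨n, hn⟩ := hnil
        rw [← map_pow] at hn
        obtain ⟨⟨s, hs⟩, hsn⟩ := (IsLocalization.map_eq_zero_iff q.primeCompl _ _).mp hn
        exact ⟨n, s, hs, hsn⟩
      choose n s hs hsn using key
      classical
      set r : R := ∏ i ∈ f.support, s i with hr
      have hrP : r ∈ q.primeCompl := Submonoid.prod_mem _ (fun i _ => hs i)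
      have hr0 : r ≠ 0 := fun h0 => hrP (h0 ▸ q.zero_mem)
      have h2 : ∀ i ∈ f.support, ∃ k : ℕ, r * f.coeff i ^ k = 0 := by
        intro i hi
        refine ⟨n i, ?_⟩
        rw [hr, ← Finset.prod_erase_mul _ _ hi, mul_assoc, hsn, mul_zero]
      obtain ⟨r', hr', hann, -⟩ := ann_finset f.support f.coeff r hr0 h2
      have hsmul : r' • f = 0 := by
        ext i
        rw [Polynomial.coeff_smul, Polynomial.coeff_zero, smul_eq_mul]
        by_cases hi : i ∈ f.support
        · exact hann i hi
        · rw [Polynomial.notMem_support_iff.mp hi, mul_zero]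
      exact absurd (Polynomial.mem_nonZeroDivisors_iff.mp hreg r' hsmul) hr'
    obtain ⟨k, hk⟩ := IsNoetherianRing.isNilpotent_nilradical R
    refine ⟨k, ?_⟩
    have hmono : maximalIdeal R ^ k ≤ nilradical R ^ k := Ideal.pow_right_mono hle k
    rw [hk] at hmono
    exact le_bot_iff.mp hmono
  · intro hArt
    rcases subsingleton_or_nontrivial R with hS | hN
    · refine ⟨1, fun z hz => ?_, one_mem _⟩
      simp [Subsingleton.elim ((1 : R[X]).eval z) 0]
    have hnil : IsNilpotent (maximalIdeal R) := by
      rw [← IsLocalRing.jacobson_eq_maximalIdeal (⊥ : Ideal R) bot_ne_top]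
      exact IsArtinianRing.isNilpotent_jacobson_bot
    obtain ⟨nn, hnn⟩ := hnil
    refine ⟨X ^ nn, fun z hz => ?_, pow_mem (Polynomial.monic_X.mem_nonZeroDivisors) nn⟩
    show (X ^ nn : R[X]).eval z ∈ (⊥ : Ideal R)
    rw [Polynomial.eval_pow, Polynomial.eval_X]
    have h := Ideal.pow_mem_pow hz nn
    rw [hnn] at h
    exact h
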